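/- Let H(x) = tanh(x/√2), and let φ, ψ : ℝ × ℝ → ℝ be C² functions satisfying, for all (t,x), the linearized Bäcklund system for φ⁴: ∂_x φ − ∂_t ψ = −√2·H(x)·φ and ∂_t φ − ∂_x ψ = −√2·H(x)·ψ. Then ∂_t² φ + 𝓛_H φ = 0 and ∂_t² ψ + 𝓛̃_H ψ = 0, i.e., ∂_t² φ − ∂_x² φ + (−1 + 3H(x)²)·φ = 0 and ∂_t² ψ − ∂_x² ψ + (1 + H(x)²)·ψ = 0. -/

import Mathlib

/-- The φ⁴ kink. -/
noncomputable def phi4Kink (x : ℝ) : ℝ := Real.tanh (x / Real.sqrt 2)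

section helpers

variable {u : ℝ × ℝ → ℝ}

private lemma pd_t (hu : Differentiable ℝ u) (t x : ℝ) :
    HasDerivAt (fun t' => u (t', x)) (fderiv ℝ u (t, x) (1, 0)) t := by
  have hcurve : HasDerivAt (fun t' : ℝ => ((t', x) : ℝ × ℝ)) ((1 : ℝ), (0 : ℝ)) t :=
    (hasDerivAt_id t).prodMk (hasDerivAt_const t x)
  exact (hu (t, x)).hasFDerivAt.comp_hasDerivAt t hcurve

private lemma pd_x (hu : Differentiable ℝ u) (t x : ℝ) :
    HasDerivAt (fun x' => u (t, x')) (fderiv ℝ u (t, x) (0, 1)) x := by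
  have hcurve : HasDerivAt (fun x' : ℝ => ((t, x') : ℝ × ℝ)) ((0 : ℝ), (1 : ℝ)) x :=
    (hasDerivAt_const x t).prodMk (hasDerivAt_id x)
  exact (hu (t, x)).hasFDerivAt.comp_hasDerivAt x hcurve

private lemma pd2_t (hu : ContDiff ℝ 2 u) (v : ℝ × ℝ) (t x : ℝ) :
    HasDerivAt (fun t' => fderiv ℝ u (t', x) v)
      (fderiv ℝ (fderiv ℝ u) (t, x) (1, 0) v) t := by
  have hD : ContDiff ℝ 1 (fderiv ℝ u) := hu.fderiv_right (by norm_num)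
  have hDF : HasFDerivAt (fderiv ℝ u) (fderiv ℝ (fderiv ℝ u) (t, x)) (t, x) :=
    (hD.differentiable one_ne_zero (t, x)).hasFDerivAt
  have happ : HasFDerivAt (fun q => fderiv ℝ u q v)
      ((ContinuousLinearMap.apply ℝ ℝ v).comp (fderiv ℝ (fderiv ℝ u) (t, x))) (t, x) :=
    ((ContinuousLinearMap.apply ℝ ℝ v).hasFDerivAt).comp (t, x) hDF
  have hcurve : HasDerivAt (fun t' : ℝ => ((t', x) : ℝ × ℝ)) ((1 : ℝ), (0 : ℝ)) t :=
    (hasDerivAt_id t).prodMk (hasDerivAt_const t x)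
  exact happ.comp_hasDerivAt t hcurve

private lemma pd2_x (hu : ContDiff ℝ 2 u) (v : ℝ × ℝ) (t x : ℝ) :
    HasDerivAt (fun x' => fderiv ℝ u (t, x') v)
      (fderiv ℝ (fderiv ℝ u) (t, x) (0, 1) v) x := by
  have hD : ContDiff ℝ 1 (fderiv ℝ u) := hu.fderiv_right (by norm_num)
  have hDF : HasFDerivAt (fderiv ℝ u) (fderiv ℝ (fderiv ℝ u) (t, x)) (t, x) :=
    (hD.differentiable one_ne_zero (t, x)).hasFDerivAt
  have happ : HasFDerivAt (fun q => fderiv ℝ u q v)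
      ((ContinuousLinearMap.apply ℝ ℝ v).comp (fderiv ℝ (fderiv ℝ u) (t, x))) (t, x) :=
    ((ContinuousLinearMap.apply ℝ ℝ v).hasFDerivAt).comp (t, x) hDF
  have hcurve : HasDerivAt (fun x' : ℝ => ((t, x') : ℝ × ℝ)) ((0 : ℝ), (1 : ℝ)) x :=
    (hasDerivAt_const x t).prodMk (hasDerivAt_id x)
  exact happ.comp_hasDerivAt x hcurve

private lemma pd_sym (hu : ContDiff ℝ 2 u) (p v w : ℝ × ℝ) :
    fderiv ℝ (fderiv ℝ u) p v w = fderiv ℝ (fderiv ℝ u) p w v := by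
  have hd : Differentiable ℝ u := hu.differentiable (by norm_num)
  have hD : ContDiff ℝ 1 (fderiv ℝ u) := hu.fderiv_right (by norm_num)
  exact second_derivative_symmetric (fun y => (hd y).hasFDerivAt)
    ((hD.differentiable one_ne_zero p).hasFDerivAt) v w

end helpers

private lemma hasDerivAt_phi4Kink (x : ℝ) :
    HasDerivAt phi4Kink ((1 - phi4Kink x ^ 2) / Real.sqrt 2) x := by
  have hc : Real.cosh (x / Real.sqrt 2) ≠ 0 := (Real.cosh_pos _).ne'
  have hin : HasDerivAt (fun y : ℝ => y / Real.sqrt 2) (1 / Real.sqrt 2) x := by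
    simpa using (hasDerivAt_id x).div_const (Real.sqrt 2)
  have htanh : HasDerivAt Real.tanh (1 - Real.tanh (x / Real.sqrt 2) ^ 2)
      (x / Real.sqrt 2) := by
    have hdiv := (Real.hasDerivAt_sinh (x / Real.sqrt 2)).div
      (Real.hasDerivAt_cosh (x / Real.sqrt 2)) hc
    have heq : (Real.sinh / Real.cosh) = Real.tanh := by
      funext y; rw [Pi.div_apply, Real.tanh_eq_sinh_div_cosh]
    rw [heq] at hdiv
    refine hdiv.congr_deriv ?_
    rw [Real.tanh_eq_sinh_div_cosh]
    field_simp
  have h := htanh.comp x hin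
  have : (1 - Real.tanh (x / Real.sqrt 2) ^ 2) * (1 / Real.sqrt 2)
      = (1 - phi4Kink x ^ 2) / Real.sqrt 2 := by
    rw [phi4Kink]; ring
  rw [this] at h
  exact h

/-- Solutions of the linearized Bäcklund system for φ⁴ around the kink
H satisfy ∂ₜ²φ + 𝓛_H φ = 0 and ∂ₜ²ψ + 𝓛̃_H ψ = 0. -/
theorem linearized_backlund_phi4
    (φ ψ : ℝ → ℝ → ℝ)
    (hφ : ContDiff ℝ 2 (fun p : ℝ × ℝ => φ p.1 p.2))
    (hψ : ContDiff ℝ 2 (fun p : ℝ × ℝ => ψ p.1 p.2))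
    (h1 : ∀ t x : ℝ,
      deriv (fun x' => φ t x') x - deriv (fun t' => ψ t' x) t
        = -Real.sqrt 2 * phi4Kink x * φ t x)
    (h2 : ∀ t x : ℝ,
      deriv (fun t' => φ t' x) t - deriv (fun x' => ψ t x') x
        = -Real.sqrt 2 * phi4Kink x * ψ t x) :
    (∀ t x : ℝ,
      deriv (fun t' => deriv (fun t'' => φ t'' x) t') t
        - deriv (fun x' => deriv (fun x'' => φ t x'') x') x
        + (-1 + 3 * (phi4Kink x) ^ 2) * φ t x = 0)
    ∧ (∀ t x : ℝ,
      deriv (fun t' => deriv (fun t'' => ψ t'' x) t') t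
        - deriv (fun x' => deriv (fun x'' => ψ t x'') x') x
        + (1 + (phi4Kink x) ^ 2) * ψ t x = 0) := by
  set f : ℝ × ℝ → ℝ := fun p => φ p.1 p.2 with hf
  set g : ℝ × ℝ → ℝ := fun p => ψ p.1 p.2 with hg
  have hfd : Differentiable ℝ f := hφ.differentiable (by norm_num)
  have hgd : Differentiable ℝ g := hψ.differentiable (by norm_num)
  have hs0 : Real.sqrt 2 ≠ 0 := by positivity
  have hs2 : Real.sqrt 2 * Real.sqrt 2 = 2 := Real.mul_self_sqrt (by norm_num)
  refine ⟨fun t x => ?_, fun t x => ?_⟩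
  all_goals {
    set H := phi4Kink x with hH
    set A := fderiv ℝ f (t, x) with hA
    set B := fderiv ℝ g (t, x) with hB
    set A' := fderiv ℝ (fderiv ℝ f) (t, x) with hA'
    set B' := fderiv ℝ (fderiv ℝ g) (t, x) with hB'
    -- rewrite outer functions in the goal
    have eφt : (fun t' : ℝ => deriv (fun t'' => φ t'' x) t')
        = fun t' => fderiv ℝ f (t', x) (1, 0) :=
      funext fun t' => (pd_t hfd t' x).deriv
    have eφx : (fun x' : ℝ => deriv (fun x'' => φ t x'') x')
        = fun x' => fderiv ℝ f (t, x') (0, 1) :=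
      funext fun x' => (pd_x hfd t x').deriv
    have eψt : (fun t' : ℝ => deriv (fun t'' => ψ t'' x) t')
        = fun t' => fderiv ℝ g (t', x) (1, 0) :=
      funext fun t' => (pd_t hgd t' x).deriv
    have eψx : (fun x' : ℝ => deriv (fun x'' => ψ t x'') x')
        = fun x' => fderiv ℝ g (t, x') (0, 1) :=
      funext fun x' => (pd_x hgd t x').deriv
    -- second derivatives in the goal
    have d2φt : deriv (fun t' : ℝ => deriv (fun t'' => φ t'' x) t') t = A' (1, 0) (1, 0) := by
      rw [eφt]; exact (pd2_t hφ (1, 0) t x).deriv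
    have d2φx : deriv (fun x' : ℝ => deriv (fun x'' => φ t x'') x') x = A' (0, 1) (0, 1) := by
      rw [eφx]; exact (pd2_x hφ (0, 1) t x).deriv
    have d2ψt : deriv (fun t' : ℝ => deriv (fun t'' => ψ t'' x) t') t = B' (1, 0) (1, 0) := by
      rw [eψt]; exact (pd2_t hψ (1, 0) t x).deriv
    have d2ψx : deriv (fun x' : ℝ => deriv (fun x'' => ψ t x'') x') x = B' (0, 1) (0, 1) := by
      rw [eψx]; exact (pd2_x hψ (0, 1) t x).deriv
    -- equation h1 differentiated in x
    have hfun1 : (fun x' => deriv (fun x'' => φ t x'') x' - deriv (fun t' => ψ t' x') t)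
        = fun x' => fderiv ℝ f (t, x') (0, 1) - fderiv ℝ g (t, x') (1, 0) :=
      funext fun x' => by rw [(pd_x hfd t x').deriv, (pd_t hgd t x').deriv]
    have hL1 : HasDerivAt
        (fun x' => deriv (fun x'' => φ t x'') x' - deriv (fun t' => ψ t' x') t)
        (A' (0, 1) (0, 1) - B' (0, 1) (1, 0)) x := by
      rw [hfun1]; exact (pd2_x hφ (0, 1) t x).sub (pd2_x hψ (1, 0) t x)
    have hR1 : HasDerivAt (fun x' => -Real.sqrt 2 * phi4Kink x' * φ t x')
        ((-Real.sqrt 2 * ((1 - H ^ 2) / Real.sqrt 2)) * φ t x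
          + (-Real.sqrt 2 * H) * A (0, 1)) x :=
      ((hasDerivAt_phi4Kink x).const_mul (-Real.sqrt 2)).mul (pd_x hfd t x)
    have hR1' : HasDerivAt
        (fun x' => deriv (fun x'' => φ t x'') x' - deriv (fun t' => ψ t' x') t)
        ((-Real.sqrt 2 * ((1 - H ^ 2) / Real.sqrt 2)) * φ t x
          + (-Real.sqrt 2 * H) * A (0, 1)) x := by
      have he : (fun x' => deriv (fun x'' => φ t x'') x' - deriv (fun t' => ψ t' x') t)
          = fun x' => -Real.sqrt 2 * phi4Kink x' * φ t x' := funext fun x' => h1 t x'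
      rw [he]; exact hR1
    have eqX : A' (0, 1) (0, 1) - B' (0, 1) (1, 0)
        = (-Real.sqrt 2 * ((1 - H ^ 2) / Real.sqrt 2)) * φ t x
          + (-Real.sqrt 2 * H) * A (0, 1) := hL1.unique hR1'
    -- equation h2 differentiated in t
    have hfun2 : (fun t' => deriv (fun t'' => φ t'' x) t' - deriv (fun x' => ψ t' x') x)
        = fun t' => fderiv ℝ f (t', x) (1, 0) - fderiv ℝ g (t', x) (0, 1) :=
      funext fun t' => by rw [(pd_t hfd t' x).deriv, (pd_x hgd t' x).deriv]
    have hL2 : HasDerivAt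
        (fun t' => deriv (fun t'' => φ t'' x) t' - deriv (fun x' => ψ t' x') x)
        (A' (1, 0) (1, 0) - B' (1, 0) (0, 1)) t := by
      rw [hfun2]; exact (pd2_t hφ (1, 0) t x).sub (pd2_t hψ (0, 1) t x)
    have hR2' : HasDerivAt
        (fun t' => deriv (fun t'' => φ t'' x) t' - deriv (fun x' => ψ t' x') x)
        ((-Real.sqrt 2 * H) * B (1, 0)) t := by
      have he : (fun t' => deriv (fun t'' => φ t'' x) t' - deriv (fun x' => ψ t' x') x)
          = fun t' => -Real.sqrt 2 * phi4Kink x * ψ t' x := funext fun t' => h2 t' x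
      rw [he]
      exact (pd_t hgd t x).const_mul (-Real.sqrt 2 * phi4Kink x)
    have eqT : A' (1, 0) (1, 0) - B' (1, 0) (0, 1)
        = (-Real.sqrt 2 * H) * B (1, 0) := hL2.unique hR2'
    -- equation h1 differentiated in t
    have hfun3 : (fun t' => deriv (fun x' => φ t' x') x - deriv (fun t'' => ψ t'' x) t')
        = fun t' => fderiv ℝ f (t', x) (0, 1) - fderiv ℝ g (t', x) (1, 0) :=
      funext fun t' => by rw [(pd_x hfd t' x).deriv, (pd_t hgd t' x).deriv]
    have hL3 : HasDerivAt
        (fun t' => deriv (fun x' => φ t' x') x - deriv (fun t'' => ψ t'' x) t')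
        (A' (1, 0) (0, 1) - B' (1, 0) (1, 0)) t := by
      rw [hfun3]; exact (pd2_t hφ (0, 1) t x).sub (pd2_t hψ (1, 0) t x)
    have hR3' : HasDerivAt
        (fun t' => deriv (fun x' => φ t' x') x - deriv (fun t'' => ψ t'' x) t')
        ((-Real.sqrt 2 * H) * A (1, 0)) t := by
      have he : (fun t' => deriv (fun x' => φ t' x') x - deriv (fun t'' => ψ t'' x) t')
          = fun t' => -Real.sqrt 2 * phi4Kink x * φ t' x := funext fun t' => h1 t' x
      rw [he]
      exact (pd_t hfd t x).const_mul (-Real.sqrt 2 * phi4Kink x)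
    have eqT2 : A' (1, 0) (0, 1) - B' (1, 0) (1, 0)
        = (-Real.sqrt 2 * H) * A (1, 0) := hL3.unique hR3'
    -- equation h2 differentiated in x
    have hfun4 : (fun x' => deriv (fun t' => φ t' x') t - deriv (fun x'' => ψ t x'') x')
        = fun x' => fderiv ℝ f (t, x') (1, 0) - fderiv ℝ g (t, x') (0, 1) :=
      funext fun x' => by rw [(pd_t hfd t x').deriv, (pd_x hgd t x').deriv]
    have hL4 : HasDerivAt
        (fun x' => deriv (fun t' => φ t' x') t - deriv (fun x'' => ψ t x'') x')
        (A' (0, 1) (1, 0) - B' (0, 1) (0, 1)) x := by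
      rw [hfun4]; exact (pd2_x hφ (1, 0) t x).sub (pd2_x hψ (0, 1) t x)
    have hR4 : HasDerivAt (fun x' => -Real.sqrt 2 * phi4Kink x' * ψ t x')
        ((-Real.sqrt 2 * ((1 - H ^ 2) / Real.sqrt 2)) * ψ t x
          + (-Real.sqrt 2 * H) * B (0, 1)) x :=
      ((hasDerivAt_phi4Kink x).const_mul (-Real.sqrt 2)).mul (pd_x hgd t x)
    have hR4' : HasDerivAt
        (fun x' => deriv (fun t' => φ t' x') t - deriv (fun x'' => ψ t x'') x')
        ((-Real.sqrt 2 * ((1 - H ^ 2) / Real.sqrt 2)) * ψ t x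
          + (-Real.sqrt 2 * H) * B (0, 1)) x := by
      have he : (fun x' => deriv (fun t' => φ t' x') t - deriv (fun x'' => ψ t x'') x')
          = fun x' => -Real.sqrt 2 * phi4Kink x' * ψ t x' := funext fun x' => h2 t x'
      rw [he]; exact hR4
    have eqX2 : A' (0, 1) (1, 0) - B' (0, 1) (0, 1)
        = (-Real.sqrt 2 * ((1 - H ^ 2) / Real.sqrt 2)) * ψ t x
          + (-Real.sqrt 2 * H) * B (0, 1) := hL4.unique hR4'
    -- first order equations at the point itself
    have h1' : A (0, 1) - B (1, 0) = -Real.sqrt 2 * H * φ t x := by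
      have := h1 t x
      rwa [(pd_x hfd t x).deriv, (pd_t hgd t x).deriv] at this
    have h2' : A (1, 0) - B (0, 1) = -Real.sqrt 2 * H * ψ t x := by
      have := h2 t x
      rwa [(pd_t hfd t x).deriv, (pd_x hgd t x).deriv] at this
    have hsymA : A' (1, 0) (0, 1) = A' (0, 1) (1, 0) := pd_sym hφ (t, x) (1, 0) (0, 1)
    have hsymB : B' (1, 0) (0, 1) = B' (0, 1) (1, 0) := pd_sym hψ (t, x) (1, 0) (0, 1)
    have hds : Real.sqrt 2 * ((1 - H ^ 2) / Real.sqrt 2) = 1 - H ^ 2 :=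
      mul_div_cancel₀ _ hs0
    first
    | (rw [d2φt, d2φx]
       linear_combination eqT - eqX + hsymB + (Real.sqrt 2 * H) * h1' + φ t x * hds
         - (H ^ 2 * φ t x) * hs2)
    | (rw [d2ψt, d2ψx]
       linear_combination eqX2 - eqT2 + hsymA + (Real.sqrt 2 * H) * h2' - ψ t x * hds
         - (H ^ 2 * ψ t x) * hs2)
  }
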